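/- Let p, q ≥ 1 and let A = A₀ + A₁ζ ∈ M_{p+q}(𝒟) with A₀, A₁ ∈ M_{p+q}(K), where A₀ is the block diagonal matrix fromBlocks A₀′ 0 0 A₀″ with A₀′ ∈ M_p(K), A₀″ ∈ M_q(K), and no α ∈ K is a common eigenvalue of A₀′ and A₀″ (i.e. there is no α with det(A₀′ − α·1) = 0 and det(A₀″ − α·1) = 0). Then there exist matrices B₀′, B₁′ ∈ M_p(K) and B₀″, B₁″ ∈ M_q(K) such that: (i) A is similar over 𝒟 to the block diagonal matrix fromBlocks (B₀′ + B₁′ζ) 0 0 (B₀″ + B₁″ζ); (ii) A₀′ is K-similar to B₀′ and A₀″ is K-similar to B₀″. -/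

import Mathlib

open Matrix

/-- The 𝒟-matrix `A₀ + A₁ζ` built from two matrices over `K`. -/
def dualMat {K : Type*} [Field K] {ι : Type*} (A₀ A₁ : Matrix ι ι K) :
    Matrix ι ι (DualNumber K) :=
  A₀.map (TrivSqZeroExt.inl : K → DualNumber K) +
    A₁.map (TrivSqZeroExt.inr : K → DualNumber K)

/-- Similarity of matrices over the dual numbers. -/
def DSimilar {K : Type*} [Field K] {ι : Type*} [Fintype ι] [DecidableEq ι]
    (A B : Matrix ι ι (DualNumber K)) : Prop :=
  ∃ G : Matrix ι ι (DualNumber K), IsUnit G ∧ B = G * A * G⁻¹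

/-- K-similarity of matrices over `K`. -/
def KSimilar {K : Type*} [Field K] {ι : Type*} [Fintype ι] [DecidableEq ι]
    (A B : Matrix ι ι K) : Prop :=
  ∃ P : Matrix ι ι K, IsUnit P ∧ B = P * A * P⁻¹

section Aux

open Polynomial TrivSqZeroExt

variable {K : Type*} [Field K]

lemma my_charpoly_eval {n : Type*} [Fintype n] [DecidableEq n]
    (M : Matrix n n K) (r : K) :
    M.charpoly.eval r = (r • (1 : Matrix n n K) - M).det := by
  rw [Matrix.charpoly, ← Polynomial.coe_evalRingHom, RingHom.map_det]
  congr 1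
  ext i j
  by_cases h : i = j
  · subst h
    simp [RingHom.mapMatrix_apply, Matrix.map_apply, Matrix.charmatrix_apply_eq]
  · simp [RingHom.mapMatrix_apply, Matrix.map_apply,
      Matrix.charmatrix_apply_ne _ _ _ h, Matrix.one_apply_ne h]

lemma my_aeval_comm {p q : ℕ}
    (A : Matrix (Fin p) (Fin p) K) (B : Matrix (Fin q) (Fin q) K)
    (X : Matrix (Fin p) (Fin q) K) (h : A * X = X * B) (f : K[X]) :
    (aeval A f) * X = X * (aeval B f) := by
  have hpow : ∀ n : ℕ, A ^ n * X = X * B ^ n := by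
    intro n
    induction n with
    | zero => simp
    | succ k ih =>
      rw [pow_succ, pow_succ, Matrix.mul_assoc, h, ← Matrix.mul_assoc, ih,
        Matrix.mul_assoc]
  induction f using Polynomial.induction_on' with
  | add f g hf hg => rw [map_add, map_add, Matrix.add_mul, Matrix.mul_add, hf, hg]
  | monomial n a =>
    rw [aeval_monomial, aeval_monomial, Algebra.algebraMap_eq_smul_one,
      Algebra.algebraMap_eq_smul_one, smul_one_mul, smul_one_mul,
      Matrix.smul_mul, Matrix.mul_smul, hpow]

lemma my_sylvester [IsAlgClosed K] {p q : ℕ}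
    (A : Matrix (Fin p) (Fin p) K) (B : Matrix (Fin q) (Fin q) K)
    (h : ∀ α : K, (B - α • (1 : Matrix (Fin q) (Fin q) K)).det = 0 →
      (A - α • (1 : Matrix (Fin p) (Fin p) K)).det ≠ 0)
    (C0 : Matrix (Fin p) (Fin q) K) :
    ∃ Z : Matrix (Fin p) (Fin q) K, A * Z - Z * B = C0 := by
  let T : Matrix (Fin p) (Fin q) K →ₗ[K] Matrix (Fin p) (Fin q) K :=
    { toFun := fun Z => A * Z - Z * B
      map_add' := fun Z W => by
        simp only [Matrix.mul_add, Matrix.add_mul]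
        abel
      map_smul' := fun c Z => by
        simp [Matrix.mul_smul, Matrix.smul_mul, smul_sub] }
  have h0 : ∀ Z, T Z = 0 → Z = 0 := by
    intro Z hZ
    have hAB : A * Z = Z * B := sub_eq_zero.mp hZ
    have hu : IsUnit (aeval A B.charpoly) := by
      have hsplit := IsAlgClosed.splits B.charpoly
      have hfac := hsplit.eq_prod_roots_of_monic
        B.charpoly_monic
      have hfac' : B.charpoly
          = (B.charpoly.roots.toList.map fun r => (X : K[X]) - C r).prod := by
        conv_lhs => rw [hfac, ← Multiset.coe_toList B.charpoly.roots]
        rw [Multiset.map_coe, Multiset.prod_coe]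
      rw [hfac', map_list_prod (aeval A)]
      apply List.prod_isUnit
      intro m hm
      simp only [List.map_map, List.mem_map, Function.comp] at hm
      obtain ⟨r, hr, rfl⟩ := hm
      have hroot : B.charpoly.eval r = 0 := by
        have hmem : r ∈ B.charpoly.roots := Multiset.mem_toList.mp hr
        exact (Polynomial.mem_roots'.mp hmem).2
      have hdetB : (B - r • (1 : Matrix (Fin q) (Fin q) K)).det = 0 := by
        have h1 : (r • (1 : Matrix (Fin q) (Fin q) K) - B).det = 0 := by
          rw [← my_charpoly_eval]; exact hroot
        rw [(neg_sub (r • (1 : Matrix (Fin q) (Fin q) K)) B).symm,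
          Matrix.det_neg, h1, mul_zero]
      have heval : aeval A ((X : K[X]) - C r)
          = A - r • (1 : Matrix (Fin p) (Fin p) K) := by
        simp [Algebra.algebraMap_eq_smul_one]
      rw [heval, Matrix.isUnit_iff_isUnit_det]
      exact isUnit_iff_ne_zero.mpr (h r hdetB)
    have hzero : (aeval A B.charpoly) * Z = 0 := by
      rw [my_aeval_comm A B Z hAB, Matrix.aeval_self_charpoly, Matrix.mul_zero]
    obtain ⟨u, hu'⟩ := hu
    rw [← hu'] at hzero
    have hZ1 : Z
        = (↑u⁻¹ : Matrix (Fin p) (Fin p) K) * ((↑u : Matrix (Fin p) (Fin p) K) * Z) := by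
      rw [← Matrix.mul_assoc, Units.inv_mul, Matrix.one_mul]
    rw [hZ1, hzero, Matrix.mul_zero]
  have hinj : Function.Injective T := by
    intro Z W hZW
    have hsub : T (Z - W) = 0 := by rw [map_sub, hZW, sub_self]
    exact sub_eq_zero.mp (h0 _ hsub)
  obtain ⟨Z, hZ⟩ := (LinearMap.injective_iff_surjective.mp hinj) C0
  exact ⟨Z, hZ⟩

lemma my_dualMat_mul {ι : Type*} [Fintype ι] (X x Y y : Matrix ι ι K) :
    dualMat X x * dualMat Y y = dualMat (X * Y) (X * y + x * Y) := by
  ext i j <;>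
    simp [dualMat, Matrix.mul_apply, Matrix.add_apply, Matrix.map_apply,
      TrivSqZeroExt.fst_sum, TrivSqZeroExt.snd_sum, TrivSqZeroExt.fst_mul,
      TrivSqZeroExt.snd_mul, Finset.sum_add_distrib, mul_comm]

lemma my_dualMat_one {ι : Type*} [Fintype ι] [DecidableEq ι] :
    (dualMat 1 0 : Matrix ι ι (DualNumber K)) = 1 := by
  ext i j <;>
    simp [dualMat, Matrix.map_apply, Matrix.one_apply, apply_ite]

lemma my_fromBlocks_dualMat {p q : ℕ}
    (W₀ W₁ : Matrix (Fin p) (Fin p) K) (Z₀ Z₁ : Matrix (Fin q) (Fin q) K) :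
    Matrix.fromBlocks (dualMat W₀ W₁) 0 0 (dualMat Z₀ Z₁)
      = dualMat (Matrix.fromBlocks W₀ 0 0 Z₀) (Matrix.fromBlocks W₁ 0 0 Z₁) := by
  ext (i | i) (j | j) <;>
    simp [dualMat, Matrix.fromBlocks, Matrix.map_apply, Matrix.add_apply]

end Aux

/-- Theorem 2.2: splitting off blocks with disjoint spectra. -/
theorem stmt_1 {K : Type*} [Field K] [IsAlgClosed K] [CharZero K] {p q : ℕ}
    (hp : 1 ≤ p) (hq : 1 ≤ q)
    (A₀' : Matrix (Fin p) (Fin p) K) (A₀'' : Matrix (Fin q) (Fin q) K)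
    (A₁ : Matrix (Fin p ⊕ Fin q) (Fin p ⊕ Fin q) K)
    (hev : ¬ ∃ α : K, (A₀' - α • (1 : Matrix (Fin p) (Fin p) K)).det = 0 ∧
        (A₀'' - α • (1 : Matrix (Fin q) (Fin q) K)).det = 0) :
    ∃ (B₀' B₁' : Matrix (Fin p) (Fin p) K) (B₀'' B₁'' : Matrix (Fin q) (Fin q) K),
      DSimilar (dualMat (Matrix.fromBlocks A₀' 0 0 A₀'') A₁)
        (Matrix.fromBlocks (dualMat B₀' B₁') 0 0 (dualMat B₀'' B₁'')) ∧
      KSimilar A₀' B₀' ∧ KSimilar A₀'' B₀'' := by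
  push_neg at hev
  obtain ⟨Z₁₂, hZ₁₂⟩ := my_sylvester A₀' A₀''
    (fun α h2 h1 => hev α h1 h2) A₁.toBlocks₁₂
  obtain ⟨Z₂₁, hZ₂₁⟩ := my_sylvester A₀'' A₀'
    hev A₁.toBlocks₂₁
  refine ⟨A₀', A₁.toBlocks₁₁, A₀'', A₁.toBlocks₂₂, ?_, ⟨1, isUnit_one, by simp⟩,
    ⟨1, isUnit_one, by simp⟩⟩
  set N : Matrix (Fin p ⊕ Fin q) (Fin p ⊕ Fin q) K :=
    Matrix.fromBlocks 0 Z₁₂ Z₂₁ 0 with hN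
  set G : Matrix (Fin p ⊕ Fin q) (Fin p ⊕ Fin q) (DualNumber K) := dualMat 1 N with hG
  have hGinv1 : G * dualMat 1 (-N) = 1 := by
    rw [hG, my_dualMat_mul]
    simpa using my_dualMat_one
  have hGinv2 : dualMat 1 (-N) * G = 1 := by
    rw [hG, my_dualMat_mul]
    simpa using my_dualMat_one
  have : Invertible G := ⟨dualMat 1 (-N), hGinv2, hGinv1⟩
  refine ⟨G, isUnit_of_invertible G, ?_⟩
  rw [my_fromBlocks_dualMat]
  have key : Matrix.fromBlocks A₀' 0 0 A₀'' * N
        + Matrix.fromBlocks A₁.toBlocks₁₁ 0 0 A₁.toBlocks₂₂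
      = A₁ + N * Matrix.fromBlocks A₀' 0 0 A₀'' := by
    have e1 : Matrix.fromBlocks A₀' 0 0 A₀'' * N
        = Matrix.fromBlocks 0 (A₀' * Z₁₂) (A₀'' * Z₂₁) 0 := by
      rw [hN, Matrix.fromBlocks_multiply]
      simp
    have e2 : N * Matrix.fromBlocks A₀' 0 0 A₀''
        = Matrix.fromBlocks 0 (Z₁₂ * A₀'') (Z₂₁ * A₀') 0 := by
      rw [hN, Matrix.fromBlocks_multiply]
      simp
    have h12 : A₀' * Z₁₂ = A₁.toBlocks₁₂ + Z₁₂ * A₀'' := by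
      rw [← hZ₁₂]; abel
    have h21 : A₀'' * Z₂₁ = A₁.toBlocks₂₁ + Z₂₁ * A₀' := by
      rw [← hZ₂₁]; abel
    have lhs : Matrix.fromBlocks A₀' 0 0 A₀'' * N
          + Matrix.fromBlocks A₁.toBlocks₁₁ 0 0 A₁.toBlocks₂₂
        = Matrix.fromBlocks A₁.toBlocks₁₁ (A₀' * Z₁₂) (A₀'' * Z₂₁)
            A₁.toBlocks₂₂ := by
      rw [e1, Matrix.fromBlocks_add]
      simp
    have rhs : A₁ + N * Matrix.fromBlocks A₀' 0 0 A₀''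
        = Matrix.fromBlocks A₁.toBlocks₁₁ (A₁.toBlocks₁₂ + Z₁₂ * A₀'')
            (A₁.toBlocks₂₁ + Z₂₁ * A₀') A₁.toBlocks₂₂ := by
      conv_lhs => rw [← Matrix.fromBlocks_toBlocks A₁]
      rw [e2, Matrix.fromBlocks_add]
      simp
    rw [lhs, rhs, h12, h21]
  have hcomm :
      dualMat (Matrix.fromBlocks A₀' 0 0 A₀'')
          (Matrix.fromBlocks A₁.toBlocks₁₁ 0 0 A₁.toBlocks₂₂) * G
        = G * dualMat (Matrix.fromBlocks A₀' 0 0 A₀'') A₁ := by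
    rw [hG, my_dualMat_mul, my_dualMat_mul, Matrix.mul_one, Matrix.one_mul,
      Matrix.mul_one, Matrix.one_mul, key]
  rw [eq_comm, Matrix.mul_inv_eq_iff_eq_mul_of_invertible]
  exact hcomm.symm
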